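/- Let T > 0 and let Θ : [0,T] × ℝ² → ℂ be measurable with M := sup_{0≤t≤T} ‖Θ(t)‖_{X⁰} < ∞ and I := ∫₀^T ‖Θ(t)‖_{X¹} dt < ∞. Then for every t ∈ [0,T], ∫_{ℝ²} | ∫₀^t e^{−(t−z)|ξ|} N[Θ](z,ξ) dz | dξ ≤ M · I. -/

import Mathlib

open MeasureTheory Filter
open scoped ENNReal NNReal

noncomputable section

abbrev E2 : Type := EuclideanSpace ℝ (Fin 2)

/-- Fourier-side `X^σ` norm: `∫ |ξ|^σ |g ξ| dξ` (valued in `ℝ≥0∞`). -/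
def Xnorm (σ : ℝ) (g : E2 → ℂ) : ℝ≥0∞ :=
  ∫⁻ ξ : E2, ENNReal.ofReal (‖ξ‖ ^ σ) * ‖g ξ‖₊

/-- Fourier-side quasi-geostrophic nonlinearity `N[Θ]`. -/
def QGN (Θ : ℝ → E2 → ℂ) (z : ℝ) (ξ : E2) : ℂ :=
  ∫ η : E2, (((ξ 0 * η 1 - ξ 1 * η 0) / ‖η‖ : ℝ) : ℂ) * Θ z (ξ - η) * Θ z η

/-- `Θ` is a mild solution on `[0,T]` with data `Θ₀`. -/
def IsMildSolutionOn (Θ : ℝ → E2 → ℂ) (Θ₀ : E2 → ℂ) (T : ℝ) : Prop :=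
  ∀ t ∈ Set.Icc (0:ℝ) T, ∀ᵐ ξ : E2 ∂volume, Θ t ξ =
    ((Real.exp (-(t * ‖ξ‖)) : ℝ) : ℂ) * Θ₀ ξ +
    ∫ z in (0:ℝ)..t, ((Real.exp (-((t - z) * ‖ξ‖)) : ℝ) : ℂ) * QGN Θ z ξ

/-- `Θ` is a global mild solution with data `Θ₀`. -/
def IsGlobalMildSolution (Θ : ℝ → E2 → ℂ) (Θ₀ : E2 → ℂ) : Prop :=
  ∀ t : ℝ, 0 ≤ t → ∀ᵐ ξ : E2 ∂volume, Θ t ξ =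
    ((Real.exp (-(t * ‖ξ‖)) : ℝ) : ℂ) * Θ₀ ξ +
    ∫ z in (0:ℝ)..t, ((Real.exp (-((t - z) * ‖ξ‖)) : ℝ) : ℂ) * QGN Θ z ξ

/-- `Θ ∈ C_b([0,∞), X^σ)`: bounded `X^σ` norm and `L¹`-continuity of `t ↦ |·|^σ Θ(t,·)`. -/
def CbX (σ : ℝ) (Θ : ℝ → E2 → ℂ) : Prop :=
  (⨆ t ∈ Set.Ici (0:ℝ), Xnorm σ (Θ t)) < ⊤ ∧
  ∀ t ∈ Set.Ici (0:ℝ),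
    Tendsto (fun s => ∫⁻ ξ : E2, ENNReal.ofReal (‖ξ‖ ^ σ) * ‖Θ s ξ - Θ t ξ‖₊)
      (nhdsWithin t (Set.Ici 0)) (nhds 0)

lemma coeff_bound (ξ η : E2) : |(ξ 0 * η 1 - ξ 1 * η 0) / ‖η‖| ≤ ‖ξ - η‖ := by
  have hη : (0:ℝ) ≤ ‖η‖ := norm_nonneg _
  have h1 : ‖η‖ ^ 2 = η 0 ^ 2 + η 1 ^ 2 := by
    rw [EuclideanSpace.norm_eq, Real.sq_sqrt (by positivity)]
    simp [Fin.sum_univ_two, sq_abs]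
  have h2 : ‖ξ - η‖ ^ 2 = (ξ 0 - η 0) ^ 2 + (ξ 1 - η 1) ^ 2 := by
    rw [EuclideanSpace.norm_eq, Real.sq_sqrt (by positivity)]
    simp [Fin.sum_univ_two, sq_abs]
  have key : |ξ 0 * η 1 - ξ 1 * η 0| ≤ ‖ξ - η‖ * ‖η‖ := by
    have h3 : (0:ℝ) ≤ ‖ξ - η‖ := norm_nonneg _
    rcases abs_cases (ξ 0 * η 1 - ξ 1 * η 0) with ⟨he, _⟩ | ⟨he, _⟩ <;> rw [he] <;>
      nlinarith [sq_nonneg ((ξ 0 - η 0) * η 0 + (ξ 1 - η 1) * η 1),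
        sq_nonneg (‖ξ - η‖ * ‖η‖ - (ξ 0 * η 1 - ξ 1 * η 0)),
        sq_nonneg (‖ξ - η‖ * ‖η‖ + (ξ 0 * η 1 - ξ 1 * η 0)), mul_nonneg h3 hη]
  rcases eq_or_lt_of_le hη with hz | hz
  · have h0 : η 0 = 0 ∧ η 1 = 0 := by
      constructor <;> nlinarith [h1, sq_nonneg (η 0), sq_nonneg (η 1)]
    simp [h0.1, h0.2, norm_nonneg]
  · rw [abs_div, abs_of_nonneg hη, div_le_iff₀ hz]
    exact key

/-- Lemma 2.3: `X⁰` bound for the Duhamel term: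
`‖∫₀^t e^{-(t-z)|D|} N[Θ](z) dz‖_{X⁰} ≤ (sup_{[0,T]}‖Θ‖_{X⁰})(∫₀^T ‖Θ‖_{X¹})`. -/
theorem duhamel_X0_bound (T : ℝ) (hT : 0 < T)
    (Θ : ℝ → E2 → ℂ) (hmeas : Measurable (Function.uncurry Θ))
    (hsup : (⨆ t ∈ Set.Icc (0:ℝ) T, Xnorm 0 (Θ t)) < ⊤)
    (hint : (∫⁻ t in Set.Icc (0:ℝ) T, Xnorm 1 (Θ t)) < ⊤) :
    ∀ t ∈ Set.Icc (0:ℝ) T,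
      (∫⁻ ξ : E2,
          (‖∫ z in (0:ℝ)..t, ((Real.exp (-((t - z) * ‖ξ‖)) : ℝ) : ℂ) * QGN Θ z ξ‖₊ : ℝ≥0∞))
        ≤ (⨆ s ∈ Set.Icc (0:ℝ) T, Xnorm 0 (Θ s)) *
            ∫⁻ s in Set.Icc (0:ℝ) T, Xnorm 1 (Θ s) := by
  intro t ht
  obtain ⟨ht0, htT⟩ := ht
  set M : ℝ≥0∞ := ⨆ s ∈ Set.Icc (0:ℝ) T, Xnorm 0 (Θ s) with hM
  set F : ℝ → E2 → ℝ≥0∞ := fun z ξ =>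
    ∫⁻ η : E2, (ENNReal.ofReal ‖ξ - η‖ * ‖Θ z (ξ - η)‖₊) * ‖Θ z η‖₊ with hFdef
  -- measurability
  have hsub : Measurable fun p : (ℝ × E2) × E2 => Θ p.1.1 (p.1.2 - p.2) :=
    hmeas.comp ((measurable_fst.comp measurable_fst).prodMk
      ((measurable_snd.comp measurable_fst).sub measurable_snd))
  have hsnd : Measurable fun p : (ℝ × E2) × E2 => Θ p.1.1 p.2 :=
    hmeas.comp ((measurable_fst.comp measurable_fst).prodMk measurable_snd)
  have hH : Measurable (fun p : (ℝ × E2) × E2 =>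
      (ENNReal.ofReal ‖p.1.2 - p.2‖ * ‖Θ p.1.1 (p.1.2 - p.2)‖₊) * ‖Θ p.1.1 p.2‖₊) :=
    ((((measurable_snd.comp measurable_fst).sub measurable_snd).norm.ennreal_ofReal).mul
      hsub.enorm).mul hsnd.enorm
  have hF : Measurable (fun p : ℝ × E2 => F p.1 p.2) := hH.lintegral_prod_right'
  have hX1 : Measurable fun z => Xnorm 1 (Θ z) := by
    apply Measurable.lintegral_prod_right' (f := fun p : ℝ × E2 =>
      ENNReal.ofReal (‖p.2‖ ^ (1:ℝ)) * ‖Θ p.1 p.2‖₊)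
    exact ((measurable_snd.norm.pow_const _).ennreal_ofReal).mul hmeas.enorm
  -- Step 1: pointwise bound in ξ
  have step1 : ∀ ξ : E2,
      (‖∫ z in (0:ℝ)..t, ((Real.exp (-((t - z) * ‖ξ‖)) : ℝ) : ℂ) * QGN Θ z ξ‖₊ : ℝ≥0∞)
        ≤ ∫⁻ z in Set.Ioc (0:ℝ) t, F z ξ := by
    intro ξ
    rw [intervalIntegral.integral_of_le ht0]
    refine le_trans (enorm_integral_le_lintegral_enorm _) ?_
    refine lintegral_mono_ae ((ae_restrict_mem measurableSet_Ioc).mono fun z hz => ?_)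
    have hexp : (‖((Real.exp (-((t - z) * ‖ξ‖)) : ℝ) : ℂ)‖₊ : ℝ≥0∞) ≤ 1 := by
      rw [← enorm_eq_nnnorm, ← ofReal_norm]
      refine ENNReal.ofReal_le_one.2 ?_
      rw [Complex.norm_real, Real.norm_eq_abs, abs_of_pos (Real.exp_pos _)]
      exact Real.exp_le_one_iff.2 (by nlinarith [hz.2, norm_nonneg ξ])
    calc (‖((Real.exp (-((t - z) * ‖ξ‖)) : ℝ) : ℂ) * QGN Θ z ξ‖₊ : ℝ≥0∞)
        = (‖((Real.exp (-((t - z) * ‖ξ‖)) : ℝ) : ℂ)‖₊ : ℝ≥0∞) * ‖QGN Θ z ξ‖₊ := by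
          rw [nnnorm_mul]; push_cast; ring
      _ ≤ 1 * ‖QGN Θ z ξ‖₊ := mul_le_mul_left hexp _
      _ = (‖QGN Θ z ξ‖₊ : ℝ≥0∞) := one_mul _
      _ ≤ ∫⁻ η : E2, ‖(((ξ 0 * η 1 - ξ 1 * η 0) / ‖η‖ : ℝ) : ℂ) * Θ z (ξ - η) * Θ z η‖₊ :=
          enorm_integral_le_lintegral_enorm _
      _ ≤ F z ξ := by
          refine lintegral_mono fun η => ?_
          have hc : (‖(((ξ 0 * η 1 - ξ 1 * η 0) / ‖η‖ : ℝ) : ℂ)‖₊ : ℝ≥0∞)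
              ≤ ENNReal.ofReal ‖ξ - η‖ := by
            rw [← enorm_eq_nnnorm, ← ofReal_norm]
            refine ENNReal.ofReal_le_ofReal ?_
            rw [Complex.norm_real, Real.norm_eq_abs]
            exact coeff_bound ξ η
          calc (‖(((ξ 0 * η 1 - ξ 1 * η 0) / ‖η‖ : ℝ) : ℂ) * Θ z (ξ - η) * Θ z η‖₊ : ℝ≥0∞)
              = ((‖(((ξ 0 * η 1 - ξ 1 * η 0) / ‖η‖ : ℝ) : ℂ)‖₊ : ℝ≥0∞) * ‖Θ z (ξ - η)‖₊)
                  * ‖Θ z η‖₊ := by rw [nnnorm_mul, nnnorm_mul]; push_cast; ring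
            _ ≤ (ENNReal.ofReal ‖ξ - η‖ * ‖Θ z (ξ - η)‖₊) * ‖Θ z η‖₊ :=
                mul_le_mul_left (mul_le_mul_left hc _) _
  -- Step 2: convolution identity for each z
  have convo : ∀ z : ℝ, (∫⁻ ξ : E2, F z ξ) = Xnorm 1 (Θ z) * Xnorm 0 (Θ z) := by
    intro z
    have hΘz : Measurable (Θ z) := hmeas.of_uncurry_left
    set g : E2 → ℝ≥0∞ := fun x => ENNReal.ofReal ‖x‖ * ‖Θ z x‖₊ with hg
    have hgm : Measurable g := (measurable_norm.ennreal_ofReal).mul hΘz.enorm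
    have hswap : (∫⁻ ξ : E2, F z ξ) = ∫⁻ η : E2, ∫⁻ ξ : E2, g (ξ - η) * ‖Θ z η‖₊ := by
      refine lintegral_lintegral_swap ?_
      exact ((hgm.comp (measurable_fst.sub measurable_snd)).mul
        (hΘz.comp measurable_snd).enorm).aemeasurable
    rw [hswap]
    have hinner : ∀ η : E2, (∫⁻ ξ : E2, g (ξ - η) * ‖Θ z η‖₊)
        = (∫⁻ x : E2, g x) * ‖Θ z η‖₊ := by
      intro η
      have hms : Measurable fun ξ : E2 => g (ξ - η) :=
        hgm.comp ((measurable_id.sub measurable_const : Measurable fun ξ : E2 => ξ - η))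
      rw [lintegral_mul_const _ hms, lintegral_sub_right_eq_self g η]
    simp_rw [hinner]
    rw [lintegral_const_mul (f := fun η => (‖Θ z η‖₊ : ℝ≥0∞)) _ hΘz.enorm]
    congr 1
    · simp [Xnorm, hg]
    · simp [Xnorm]
  -- main calc
  calc (∫⁻ ξ : E2,
        (‖∫ z in (0:ℝ)..t, ((Real.exp (-((t - z) * ‖ξ‖)) : ℝ) : ℂ) * QGN Θ z ξ‖₊ : ℝ≥0∞))
      ≤ ∫⁻ ξ : E2, ∫⁻ z in Set.Ioc (0:ℝ) t, F z ξ := lintegral_mono step1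
    _ = ∫⁻ z in Set.Ioc (0:ℝ) t, ∫⁻ ξ : E2, F z ξ := by
        refine lintegral_lintegral_swap ?_
        exact (hF.comp measurable_swap).aemeasurable
    _ ≤ ∫⁻ z in Set.Ioc (0:ℝ) t, Xnorm 1 (Θ z) * M := by
        refine lintegral_mono_ae ((ae_restrict_mem measurableSet_Ioc).mono fun z hz => ?_)
        rw [convo z]
        refine mul_le_mul_right ?_ _
        exact le_biSup (fun s => Xnorm 0 (Θ s)) ⟨le_of_lt hz.1, le_trans hz.2 htT⟩
    _ = (∫⁻ z in Set.Ioc (0:ℝ) t, Xnorm 1 (Θ z)) * M := lintegral_mul_const _ hX1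
    _ ≤ (∫⁻ z in Set.Icc (0:ℝ) T, Xnorm 1 (Θ z)) * M := by
        refine mul_le_mul_left (lintegral_mono_set ?_) _
        exact fun z hz => ⟨le_of_lt hz.1, le_trans hz.2 htT⟩
    _ = M * ∫⁻ s in Set.Icc (0:ℝ) T, Xnorm 1 (Θ s) := mul_comm _ _


end
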